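/- arXiv:2205.04141 — 3 statements merged into one kernel-verified Lean document; each statement's English description precedes it below -/
import Mathlib

section
/- For all positive real numbers A and B, and for every n ≥ A·max(3B/2, 1)^B, the integral ∫_n^∞ t^{1/2}·exp(-(t/A)^{1/B}) dt is at most A^{1/B}·B·max(3B/2, 1)·n^{3/2 - 1/B}·exp(-(n/A)^{1/B}). -/
set_option maxHeartbeats 1000000

open MeasureTheory Real Filter Set Topology

theorem stmt2 (A B n : ℝ) (hA : 0 < A) (hB : 0 < B)
    (hn : A * (max (3 * B / 2) 1) ^ B ≤ n) :
    ∫ t in Set.Ioi n, t ^ ((1 : ℝ) / 2) * Real.exp (-(t / A) ^ ((1 : ℝ) / B)) ≤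
      A ^ ((1 : ℝ) / B) * B * max (3 * B / 2) 1 * n ^ ((3 : ℝ) / 2 - 1 / B) *
        Real.exp (-(n / A) ^ ((1 : ℝ) / B)) := by
  have hB' : B ≠ 0 := hB.ne'
  set M : ℝ := max (3 * B / 2) 1 with hMdef
  have hM1 : (1:ℝ) ≤ M := le_max_right _ _
  have hM0 : (0:ℝ) < M := lt_of_lt_of_le one_pos hM1
  have hn0 : 0 < n := lt_of_lt_of_le (by positivity) hn
  set q : ℝ := 1 / B with hq
  have hq0 : 0 < q := by positivity
  have hBq : B * q = 1 := by rw [hq]; field_simp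
  set p : ℝ := (3:ℝ) / 2 - 1 / B with hp
  have hpq : p = 3 / 2 - q := by rw [hp, hq]
  set C : ℝ := A ^ q * B * M with hC
  have hC0 : 0 < C := by positivity
  set f : ℝ → ℝ := fun t => t ^ ((1:ℝ)/2) * Real.exp (-(t / A) ^ q) with hf
  set g : ℝ → ℝ := fun t => -(C * t ^ p * Real.exp (-(t / A) ^ q)) with hg
  set g' : ℝ → ℝ := fun t =>
    (M * t ^ ((1:ℝ)/2) - C * p * t ^ (p - 1)) * Real.exp (-(t / A) ^ q) with hg'
  -- derivative
  have hderiv : ∀ t ∈ Set.Ici n, HasDerivAt g (g' t) t := by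
    intro t ht
    have ht0 : 0 < t := lt_of_lt_of_le hn0 ht
    have htA : 0 < t / A := div_pos ht0 hA
    have h1 : HasDerivAt (fun x : ℝ => x ^ p) (p * t ^ (p - 1)) t :=
      Real.hasDerivAt_rpow_const (Or.inl ht0.ne')
    have h2 : HasDerivAt (fun x : ℝ => (x / A) ^ q) (q * (t / A) ^ (q - 1) * (1 / A)) t := by
      have := (Real.hasDerivAt_rpow_const (p := q) (Or.inl htA.ne')).comp t
        ((hasDerivAt_id t).div_const A)
      simpa [Function.comp_def] using this
    have h3 : HasDerivAt (fun x : ℝ => Real.exp (-(x / A) ^ q))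
        (Real.exp (-(t / A) ^ q) * (-(q * (t / A) ^ (q - 1) * (1 / A)))) t :=
      (Real.hasDerivAt_exp _).comp t h2.neg
    have h4 := ((h1.const_mul C).mul h3).neg
    have key : C * t ^ p * (q * (t / A) ^ (q - 1) * (1 / A)) = M * t ^ ((1:ℝ)/2) := by
      have eA : A ^ q = A * A ^ (q - 1) := by
        nth_rewrite 1 [show q = 1 + (q - 1) by ring]
        rw [Real.rpow_add hA, Real.rpow_one]
      have et : t ^ ((1:ℝ)/2) = t ^ p * t ^ (q - 1) := by
        rw [← Real.rpow_add ht0, hpq]; norm_num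
      have hAq1 : A ^ (q - 1) ≠ 0 := (Real.rpow_pos_of_pos hA _).ne'
      rw [Real.div_rpow ht0.le hA.le, et, hC, eA, hq]
      field_simp
    refine h4.congr_deriv ?_
    rw [hg']
    rw [show C * (p * t ^ (p-1)) * Real.exp (-(t / A) ^ q)
        + C * t ^ p * (Real.exp (-(t / A) ^ q) * -(q * (t / A) ^ (q - 1) * (1 / A)))
        = C * (p * t ^ (p-1)) * Real.exp (-(t / A) ^ q)
        - C * t ^ p * (q * (t / A) ^ (q - 1) * (1 / A)) * Real.exp (-(t / A) ^ q) by ring,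
      key]
    ring
  -- pointwise bound
  have hbound : ∀ t ∈ Set.Ici n, f t ≤ g' t := by
    intro t ht
    have ht0 : 0 < t := lt_of_lt_of_le hn0 ht
    have hE : 0 < Real.exp (-(t / A) ^ q) := Real.exp_pos _
    have htp1 : 0 < t ^ (p - 1) := Real.rpow_pos_of_pos ht0 _
    rw [hf, hg']
    apply mul_le_mul_of_nonneg_right _ hE.le
    have aux : C * p * t ^ (p - 1) ≤ (M - 1) * t ^ ((1:ℝ)/2) := by
      rcases le_or_gt (3 * B / 2) 1 with hc | hc
      · have hM : M = 1 := max_eq_right hc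
        have h32 : (3:ℝ)/2 ≤ 1/B := by rw [le_div_iff₀ hB]; linarith
        have hple : p ≤ 0 := by rw [hp]; linarith
        rw [hM, sub_self, zero_mul]
        nlinarith [mul_pos hC0 htp1]
      · have hM : M = 3 * B / 2 := max_eq_left hc.le
        have hBp : B * p = M - 1 := by rw [hp, hM]; field_simp
        have hCp : C * p = A ^ q * M * (M - 1) := by
          rw [hC, show A ^ q * B * M * p = A ^ q * M * (B * p) by ring, hBp]
        have htq : A ^ q * M ≤ t ^ q := by
          have h1 : A * M ^ B ≤ t := le_trans hn ht
          have h2 : (A * M ^ B) ^ q ≤ t ^ q :=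
            Real.rpow_le_rpow (by positivity) h1 hq0.le
          calc A ^ q * M = (A * M ^ B) ^ q := by
                rw [Real.mul_rpow hA.le (Real.rpow_pos_of_pos hM0 B).le,
                  ← Real.rpow_mul hM0.le, hBq, Real.rpow_one]
            _ ≤ t ^ q := h2
        have et2 : t ^ q * t ^ (p - 1) = t ^ ((1:ℝ)/2) := by
          rw [← Real.rpow_add ht0, show q + (p - 1) = 1/2 by rw [hq, hp]; ring]
        calc C * p * t ^ (p - 1) = (A ^ q * M) * ((M - 1) * t ^ (p - 1)) := by
              rw [hCp]; ring
          _ ≤ t ^ q * ((M - 1) * t ^ (p - 1)) := by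
              apply mul_le_mul_of_nonneg_right htq
              exact mul_nonneg (by linarith) htp1.le
          _ = (M - 1) * t ^ ((1:ℝ)/2) := by
              rw [show t ^ q * ((M - 1) * t ^ (p - 1)) = (M - 1) * (t ^ q * t ^ (p - 1)) by ring,
                et2]
    rw [sub_mul, one_mul] at aux
    linarith
  have hg'pos : ∀ t ∈ Set.Ioi n, 0 ≤ g' t := by
    intro t ht
    have ht0 : 0 < t := hn0.trans ht
    have : 0 ≤ f t := mul_nonneg (Real.rpow_nonneg ht0.le _) (Real.exp_pos _).le
    exact this.trans (hbound t (Set.mem_Ici.2 (le_of_lt ht)))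
  -- limit
  have htend : Tendsto g atTop (𝓝 0) := by
    have hb : (0:ℝ) < (A ^ q)⁻¹ := by positivity
    have h1 : Tendsto (fun t : ℝ => (t ^ q) ^ (p / q) * Real.exp (-(A ^ q)⁻¹ * t ^ q))
        atTop (𝓝 0) :=
      (tendsto_rpow_mul_exp_neg_mul_atTop_nhds_zero (p / q) _ hb).comp
        (tendsto_rpow_atTop hq0)
    have h2 : Tendsto (fun t : ℝ => t ^ p * Real.exp (-(t / A) ^ q)) atTop (𝓝 0) := by
      apply h1.congr'
      filter_upwards [eventually_gt_atTop (0:ℝ)] with t ht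
      have e1 : (t ^ q) ^ (p / q) = t ^ p := by
        rw [← Real.rpow_mul ht.le]
        congr 1
        field_simp
      have e2 : -(A ^ q)⁻¹ * t ^ q = -(t / A) ^ q := by
        rw [Real.div_rpow ht.le hA.le]; ring
      rw [e1, e2]
    have h3 : Tendsto (fun t : ℝ => -(C * (t ^ p * Real.exp (-(t / A) ^ q))))
        atTop (𝓝 (-(C * 0))) := (h2.const_mul C).neg
    simp only [mul_zero, neg_zero, ← mul_assoc] at h3
    exact h3
  have hIg' : IntegrableOn g' (Set.Ioi n) volume :=
    integrableOn_Ioi_deriv_of_nonneg' hderiv hg'pos htend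
  have hInt : ∫ x in Set.Ioi n, g' x = 0 - g n :=
    integral_Ioi_of_hasDerivAt_of_nonneg' hderiv hg'pos htend
  have hfmeas : AEStronglyMeasurable f (volume.restrict (Set.Ioi n)) := by
    apply ContinuousOn.aestronglyMeasurable _ measurableSet_Ioi
    apply ContinuousOn.mul
    · exact continuousOn_id.rpow_const fun x hx => Or.inl (hn0.trans hx).ne'
    · exact Real.continuous_exp.comp_continuousOn
        (((continuousOn_id.div_const A).rpow_const fun x hx =>
          Or.inl (div_pos (hn0.trans hx) hA).ne').neg)
  have hIf : IntegrableOn f (Set.Ioi n) volume := by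
    apply hIg'.integrable.mono' hfmeas
    filter_upwards [ae_restrict_mem measurableSet_Ioi] with t ht
    have ht0 : 0 < t := hn0.trans ht
    rw [Real.norm_eq_abs, abs_of_nonneg (mul_nonneg (Real.rpow_nonneg ht0.le _) (Real.exp_pos _).le)]
    exact hbound t (Set.mem_Ici.2 (le_of_lt ht))
  calc ∫ t in Set.Ioi n, f t ≤ ∫ t in Set.Ioi n, g' t :=
      setIntegral_mono_on hIf hIg' measurableSet_Ioi fun t ht => hbound t (Set.mem_Ici.2 (le_of_lt ht))
    _ = 0 - g n := hInt
    _ = C * n ^ p * Real.exp (-(n / A) ^ q) := by rw [hg]; ring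
end

section
/- For every real a ≥ 1 and every real x > a, the upper incomplete gamma function satisfies Γ(a, x) ≤ a · x^{a-1} · exp(-x). -/
open MeasureTheory Real

/-- The upper incomplete gamma function `Γ(a, x) = ∫_x^∞ v^{a-1} e^{-v} dv`. -/
noncomputable def upperGamma (a x : ℝ) : ℝ :=
  ∫ v in Set.Ioi x, v ^ (a - 1) * Real.exp (-v)

theorem stmt4 (a x : ℝ) (ha : 1 ≤ a) (hx : a < x) :
    upperGamma a x ≤ a * x ^ (a - 1) * Real.exp (-x) := by
  have hx0 : (0:ℝ) < x := lt_of_le_of_lt (le_trans zero_le_one ha) hx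
  set k : ℝ := 1 - (a-1)/x with hk
  have hk0 : 0 < k := by
    have h1 : (a-1)/x < 1 := (div_lt_one hx0).mpr (by linarith)
    simp only [hk]; linarith
  set C : ℝ := x ^ (a-1) * Real.exp (-(a-1)) with hC
  have hC0 : 0 ≤ C := by positivity
  -- pointwise bound
  have hbound : ∀ v ∈ Set.Ioi x, v ^ (a-1) * Real.exp (-v) ≤ C * Real.exp (-(k*v)) := by
    intro v hv
    have hvx : x < v := hv
    have hv0 : 0 < v := hx0.trans hvx
    rw [hC, Real.rpow_def_of_pos hv0, Real.rpow_def_of_pos hx0, ← Real.exp_add,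
      mul_assoc, ← Real.exp_add, ← Real.exp_add]
    apply Real.exp_le_exp.mpr
    have hlog : Real.log (v/x) ≤ v/x - 1 := Real.log_le_sub_one_of_pos (by positivity)
    rw [Real.log_div hv0.ne' hx0.ne'] at hlog
    have h2 := mul_le_mul_of_nonneg_left hlog (by linarith : (0:ℝ) ≤ a-1)
    have hkv : k*v = v - (a-1)*(v/x) := by rw [hk]; ring
    have e1 : (a-1)*(Real.log v - Real.log x) = (a-1)*Real.log v - (a-1)*Real.log x := by ring
    have e2 : (a-1)*(v/x - 1) = (a-1)*(v/x) - (a-1) := by ring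
    rw [hkv]
    linarith [e1 ▸ e2 ▸ h2]
  have hg_int : IntegrableOn (fun v => C * Real.exp (-(k*v))) (Set.Ioi x) := by
    have := (exp_neg_integrableOn_Ioi x hk0).const_mul C
    simp only [neg_mul] at this; exact this
  have hint : (∫ v in Set.Ioi x, Real.exp (-(k*v))) = k⁻¹ * Real.exp (-(k*x)) := by
    have h := MeasureTheory.integral_comp_mul_left_Ioi (fun u => Real.exp (-u)) x hk0
    simp only [smul_eq_mul, integral_exp_neg_Ioi] at h; exact h
  have step1 : upperGamma a x ≤ C * (k⁻¹ * Real.exp (-(k*x))) := by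
    rw [upperGamma]
    calc (∫ v in Set.Ioi x, v ^ (a-1) * Real.exp (-v))
        ≤ ∫ v in Set.Ioi x, C * Real.exp (-(k*v)) := by
          apply integral_mono_of_nonneg
          · filter_upwards [ae_restrict_mem measurableSet_Ioi] with v hv
            have hv0 : 0 < v := hx0.trans hv
            positivity
          · exact hg_int
          · filter_upwards [ae_restrict_mem measurableSet_Ioi] with v hv
            exact hbound v hv
      _ = C * ∫ v in Set.Ioi x, Real.exp (-(k*v)) := by rw [integral_const_mul]
      _ = C * (k⁻¹ * Real.exp (-(k*x))) := by rw [hint]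
  have hkx : k * x = x - (a-1) := by rw [hk]; field_simp
  have hCval : C * (k⁻¹ * Real.exp (-(k*x))) = k⁻¹ * (x ^ (a-1) * Real.exp (-x)) := by
    have he : Real.exp (-(a-1)) * Real.exp (-(x-(a-1))) = Real.exp (-x) := by
      rw [← Real.exp_add]; ring_nf
    rw [hC, hkx, show x^(a-1)*Real.exp (-(a-1)) * (k⁻¹ * Real.exp (-(x-(a-1)))) =
      k⁻¹ * (x^(a-1) * (Real.exp (-(a-1)) * Real.exp (-(x-(a-1))))) from by ring, he]
  have hak : 1 ≤ a * k := by
    have h4 : a * k * x = a*x - a*(a-1) := by rw [hk]; field_simp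
    have h5 : a*(a-1) ≤ (a-1)*x := by nlinarith
    nlinarith [h4, h5, hx0]
  have hka : k⁻¹ ≤ a := by
    rw [inv_le_iff_one_le_mul₀ hk0]
    linarith [hak]
  calc upperGamma a x ≤ k⁻¹ * (x ^ (a-1) * Real.exp (-x)) := by rw [← hCval]; exact step1
    _ ≤ a * (x ^ (a-1) * Real.exp (-x)) := by
        apply mul_le_mul_of_nonneg_right hka (by positivity)
    _ = a * x ^ (a-1) * Real.exp (-x) := by ring
end

section
/- Let A ≥ 1 and B > 0, and suppose a sequence (a_n) of nonnegative reals satisfies a_n ≤ 2e·n^{1/2}·exp(-(n/A)^{1/B}) for all n ≥ 1. Then (a_n) is summable, and for all integers n ≥ A·max(3B/2,1)^B + 1, the tail sum ∑_{k ≥ n} a_k is at most 6·A^{1/B}·B·max(3B/2,1)·(n-1)^{3/2 - 1/B}·exp(-((n-1)/A)^{1/B}). -/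
open Real MeasureTheory Set

private lemma pt_bound {B M t0 u : ℝ} (hM1 : 1 ≤ M) (hMB : 3 * B / 2 ≤ M)
    (ht0 : M ≤ t0) (hu : t0 ≤ u) :
    u ^ (3 * B / 2 - 1) * Real.exp (-u) ≤
      t0 ^ (3 * B / 2 - 1) * Real.exp (-t0) * Real.exp (-(u - t0) / M) := by
  have hMpos : (0:ℝ) < M := by linarith
  have ht0pos : (0:ℝ) < t0 := by linarith
  have hupos : (0:ℝ) < u := by linarith
  rw [Real.rpow_def_of_pos hupos, Real.rpow_def_of_pos ht0pos, ← Real.exp_add, ← Real.exp_add,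
    ← Real.exp_add, Real.exp_le_exp]
  set c := 3 * B / 2 - 1 with hc
  clear_value c
  have hlog : Real.log u - Real.log t0 ≤ (u - t0) / t0 := by
    rw [← Real.log_div hupos.ne' ht0pos.ne']
    calc Real.log (u / t0) ≤ u / t0 - 1 := Real.log_le_sub_one_of_pos (div_pos hupos ht0pos)
      _ = (u - t0) / t0 := by field_simp
  have hlogmono : Real.log t0 ≤ Real.log u := Real.log_le_log ht0pos hu
  rcases le_or_gt c 0 with h | h
  · have h1 : Real.log u * c ≤ Real.log t0 * c := by nlinarith
    have h2 : (u - t0) / M ≤ u - t0 := by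
      rw [div_le_iff₀ hMpos]; nlinarith
    rw [show -(u - t0) / M = -((u - t0) / M) from by ring]
    linarith
  · have hcM : c ≤ M - 1 := by simp only [hc]; linarith
    have e1 : c * (Real.log u - Real.log t0) ≤ c * ((u - t0) / t0) :=
      mul_le_mul_of_nonneg_left hlog h.le
    have hd0 : (0:ℝ) ≤ (u - t0) / t0 := div_nonneg (by linarith) ht0pos.le
    have e2 : c * ((u - t0) / t0) ≤ (M - 1) * ((u - t0) / t0) :=
      mul_le_mul_of_nonneg_right hcM hd0
    have e3 : (M - 1) * ((u - t0) / t0) ≤ (M - 1) * ((u - t0) / M) := by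
      apply mul_le_mul_of_nonneg_left _ (by linarith)
      exact div_le_div_of_nonneg_left (by linarith) hMpos ht0
    have e4 : (M - 1) * ((u - t0) / M) = (u - t0) - (u - t0) / M := by
      field_simp
    rw [show -(u - t0) / M = -((u - t0) / M) from by ring]
    linarith

private lemma g_anti {A B M x0 : ℝ} (hA : 1 ≤ A) (hB : 0 < B) (hM1 : 1 ≤ M)
    (hMB : 3 * B / 2 ≤ M) (hx0 : A * M ^ B ≤ x0) :
    AntitoneOn (fun x : ℝ => x ^ ((1:ℝ)/2) * Real.exp (-((x / A) ^ ((1:ℝ)/B)))) (Ici x0) := by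
  have hApos : (0:ℝ) < A := by linarith
  have hMB1 : (1:ℝ) ≤ M ^ B := Real.one_le_rpow hM1 hB.le
  have hx0pos : (0:ℝ) < x0 := by nlinarith
  intro x hx y hy hxy
  simp only [mem_Ici] at hx hy
  have hxpos : (0:ℝ) < x := lt_of_lt_of_le hx0pos hx
  have hypos : (0:ℝ) < y := lt_of_lt_of_le hxpos hxy
  have htx : M ≤ (x / A) ^ ((1:ℝ)/B) := by
    have h1 : M ^ B ≤ x / A := (le_div_iff₀ hApos).2 (by nlinarith)
    have h2 : (M ^ B) ^ ((1:ℝ)/B) = M := by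
      rw [← Real.rpow_mul (by linarith : (0:ℝ) ≤ M), mul_one_div, div_self hB.ne', Real.rpow_one]
    calc M = (M ^ B) ^ ((1:ℝ)/B) := h2.symm
      _ ≤ (x / A) ^ ((1:ℝ)/B) :=
        Real.rpow_le_rpow (by positivity) h1 (by positivity)
  set tx := (x / A) ^ ((1:ℝ)/B) with htxdef
  set ty := (y / A) ^ ((1:ℝ)/B) with htydef
  set r := (y / x) ^ ((1:ℝ)/B) with hrdef
  have hyx1 : (1:ℝ) ≤ y / x := (one_le_div hxpos).2 hxy
  have hr1 : (1:ℝ) ≤ r := Real.one_le_rpow hyx1 (by positivity)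
  have hty : ty = tx * r := by
    rw [htydef, htxdef, hrdef, ← Real.mul_rpow (by positivity) (by positivity)]
    congr 1
    field_simp
  have hlogr : Real.log r = 1 / B * Real.log (y / x) := Real.log_rpow (by positivity) _
  have hlogr' : Real.log r ≤ r - 1 := Real.log_le_sub_one_of_pos (by positivity)
  have hlogyx : 0 ≤ Real.log (y / x) := Real.log_nonneg hyx1
  have h4 : 1 / B * Real.log (y / x) ≤ r - 1 := by rw [← hlogr]; exact hlogr'
  have h2 : B / 2 ≤ tx := by linarith
  have key : 1 / 2 * Real.log (y / x) ≤ ty - tx := by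
    have s1 : B / 2 * (1 / B * Real.log (y / x)) ≤ tx * (1 / B * Real.log (y / x)) :=
      mul_le_mul_of_nonneg_right h2 (by positivity)
    have s2 : tx * (1 / B * Real.log (y / x)) ≤ tx * (r - 1) :=
      mul_le_mul_of_nonneg_left h4 (by linarith)
    have s3 : B / 2 * (1 / B * Real.log (y / x)) = 1 / 2 * Real.log (y / x) := by
      field_simp
    have s4 : tx * (r - 1) = ty - tx := by rw [hty]; ring
    linarith
  show y ^ ((1:ℝ)/2) * Real.exp (-ty) ≤ x ^ ((1:ℝ)/2) * Real.exp (-tx)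
  rw [Real.rpow_def_of_pos hypos, Real.rpow_def_of_pos hxpos, ← Real.exp_add, ← Real.exp_add,
    Real.exp_le_exp]
  have hld : Real.log (y / x) = Real.log y - Real.log x := Real.log_div hypos.ne' hxpos.ne'
  linarith

private lemma integral_bound {A B M x0 X : ℝ} (hA : 1 ≤ A) (hB : 0 < B) (hM1 : 1 ≤ M)
    (hMB : 3 * B / 2 ≤ M) (hx0 : A * M ^ B ≤ x0) (hX : x0 ≤ X) :
    ∫ x in x0..X, x ^ ((1:ℝ)/2) * Real.exp (-((x / A) ^ ((1:ℝ)/B))) ≤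
      M * (A ^ ((3:ℝ)/2) * B * ((x0 / A) ^ ((1:ℝ)/B)) ^ (3 * B / 2 - 1) *
        Real.exp (-((x0 / A) ^ ((1:ℝ)/B)))) := by
  have hApos : (0:ℝ) < A := by linarith
  have hMB1 : (1:ℝ) ≤ M ^ B := Real.one_le_rpow hM1 hB.le
  have hx0A : A ≤ x0 := by nlinarith
  have hx0pos : (0:ℝ) < x0 := by linarith
  set φ : ℝ → ℝ := fun x => (x / A) ^ ((1:ℝ)/B) with hφdef
  set φ' : ℝ → ℝ := fun x => 1 / A * (1 / B) * (x / A) ^ ((1:ℝ)/B - 1) with hφ'def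
  set F : ℝ → ℝ := fun u => A ^ ((3:ℝ)/2) * B * (max u 1) ^ (3 * B / 2 - 1) * Real.exp (-u)
    with hFdef
  have huIcc : uIcc x0 X = Icc x0 X := uIcc_of_le hX
  have hxApos : ∀ x ∈ Icc x0 X, (0:ℝ) < x / A := fun x hx =>
    div_pos (lt_of_lt_of_le hx0pos hx.1) hApos
  have hd : ∀ x ∈ uIcc x0 X, HasDerivAt φ (φ' x) x := by
    intro x hx
    rw [huIcc] at hx
    have h1 : HasDerivAt (fun y : ℝ => y / A) (1 / A) x := (hasDerivAt_id x).div_const A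
    exact h1.rpow_const (Or.inl (ne_of_gt (hxApos x hx)))
  have hcont' : ContinuousOn φ' (uIcc x0 X) := by
    rw [huIcc]
    have h1 : ContinuousOn (fun x : ℝ => (x / A) ^ ((1:ℝ)/B - 1)) (Icc x0 X) :=
      (continuousOn_id.div_const A).rpow_const
        (fun x hx => Or.inl (ne_of_gt (hxApos x hx)))
    exact (continuousOn_const.mul h1)
  have hmax : Continuous fun u : ℝ => max u 1 := continuous_id.max continuous_const
  have hmaxpos : ∀ u : ℝ, (0:ℝ) < max u 1 := fun u => lt_of_lt_of_le one_pos (le_max_right u 1)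
  have hF : Continuous F :=
    ((continuous_const.mul (hmax.rpow_const fun u => Or.inl (ne_of_gt (hmaxpos u)))).mul
      (continuous_neg.rexp))
  have hφ1 : ∀ x ∈ Icc x0 X, (1:ℝ) ≤ φ x := by
    intro x hx
    have h1 : (1:ℝ) ≤ x / A := (one_le_div hApos).2 (le_trans hx0A hx.1)
    exact Real.one_le_rpow h1 (by positivity)
  have step1 : ∫ x in x0..X, x ^ ((1:ℝ)/2) * Real.exp (-((x / A) ^ ((1:ℝ)/B))) =
      ∫ x in x0..X, φ' x • (F ∘ φ) x := by
    apply intervalIntegral.integral_congr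
    intro x hx
    rw [huIcc] at hx
    have hxA := hxApos x hx
    have hmx : max (φ x) 1 = φ x := max_eq_left (hφ1 x hx)
    have e1 : ((x / A) ^ ((1:ℝ)/B)) ^ (3 * B / 2 - 1) = (x / A) ^ ((1:ℝ)/B * (3 * B / 2 - 1)) :=
      (Real.rpow_mul hxA.le _ _).symm
    have e2 : (x / A) ^ ((1:ℝ)/B - 1) * (x / A) ^ ((1:ℝ)/B * (3 * B / 2 - 1)) =
        (x / A) ^ ((1:ℝ)/2) := by
      rw [← Real.rpow_add hxA]
      congr 1
      field_simp
      ring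
    have e3 : A ^ ((3:ℝ)/2) = A * A ^ ((1:ℝ)/2) := by
      rw [show (3:ℝ)/2 = 1 + 1/2 by norm_num, Real.rpow_add hApos, Real.rpow_one]
    have e4 : (x / A) ^ ((1:ℝ)/2) * A ^ ((1:ℝ)/2) = x ^ ((1:ℝ)/2) := by
      rw [← Real.mul_rpow hxA.le hApos.le, div_mul_cancel₀ _ hApos.ne']
    simp only [Function.comp_apply, smul_eq_mul, hmx, hφdef, hφ'def, hFdef]
    rw [max_eq_left (hφ1 x hx : (1:ℝ) ≤ (x / A) ^ ((1:ℝ)/B))]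
    rw [e1, e3, ← e4, ← e2]
    field_simp
  rw [step1, intervalIntegral.integral_comp_smul_deriv hd hcont' hF]
  -- now bound the integral of F
  have ht0M : M ≤ φ x0 := by
    have h1 : M ^ B ≤ x0 / A := (le_div_iff₀ hApos).2 (by nlinarith)
    have h2 : (M ^ B) ^ ((1:ℝ)/B) = M := by
      rw [← Real.rpow_mul (by linarith : (0:ℝ) ≤ M), mul_one_div, div_self hB.ne', Real.rpow_one]
    calc M = (M ^ B) ^ ((1:ℝ)/B) := h2.symm
      _ ≤ φ x0 := Real.rpow_le_rpow (by positivity) h1 (by positivity)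
  have ht0T : φ x0 ≤ φ X := by
    exact Real.rpow_le_rpow (by positivity) (by gcongr) (by positivity)
  set t0 := φ x0
  set T := φ X
  have hMpos : (0:ℝ) < M := by linarith
  have step2 : ∫ u in t0..T, F u ≤
      ∫ u in t0..T, (A ^ ((3:ℝ)/2) * B * t0 ^ (3 * B / 2 - 1) * Real.exp (-t0)) *
        Real.exp (-(u - t0) / M) := by
    apply intervalIntegral.integral_mono_on ht0T (hF.intervalIntegrable _ _)
    · exact (continuous_const.mul
        (((continuous_id.sub continuous_const).neg.div_const M).rexp)).intervalIntegrable _ _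
    · intro u hu
      have hu0 : M ≤ u := le_trans ht0M hu.1
      have hmx : max u 1 = u := max_eq_left (by linarith)
      have hpt := pt_bound hM1 hMB ht0M hu.1
      have hAB : (0:ℝ) ≤ A ^ ((3:ℝ)/2) * B := by positivity
      have := mul_le_mul_of_nonneg_left hpt hAB
      calc F u = A ^ ((3:ℝ)/2) * B * (u ^ (3 * B / 2 - 1) * Real.exp (-u)) := by
            simp only [hFdef, hmx]; ring
        _ ≤ A ^ ((3:ℝ)/2) * B *
            (t0 ^ (3 * B / 2 - 1) * Real.exp (-t0) * Real.exp (-(u - t0) / M)) := this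
        _ = (A ^ ((3:ℝ)/2) * B * t0 ^ (3 * B / 2 - 1) * Real.exp (-t0)) *
            Real.exp (-(u - t0) / M) := by ring
  have step3 : ∫ u in t0..T, Real.exp (-(u - t0) / M) ≤ M := by
    have hder : ∀ u ∈ uIcc t0 T, HasDerivAt (fun v => -M * Real.exp (-(v - t0) / M))
        (Real.exp (-(u - t0) / M)) u := by
      intro u _
      have h1 : HasDerivAt (fun v : ℝ => -(v - t0) / M) (-1 / M) u :=
        (((hasDerivAt_id u).sub_const t0).neg).div_const M
      have h2 := (h1.exp).const_mul (-M)
      refine h2.congr_deriv ?_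
      rw [show -M * (Real.exp (-(u - t0) / M) * (-1 / M)) = Real.exp (-(u - t0) / M) * (M / M) by ring, div_self hMpos.ne', mul_one]
    have hint : IntervalIntegrable (fun u => Real.exp (-(u - t0) / M)) volume t0 T :=
      (((continuous_id.sub continuous_const).neg.div_const M).rexp).intervalIntegrable _ _
    rw [intervalIntegral.integral_eq_sub_of_hasDerivAt hder hint]
    have : (0:ℝ) < Real.exp (-(T - t0) / M) := Real.exp_pos _
    simp only [sub_self, zero_div, neg_zero, Real.exp_zero]
    nlinarith [mul_pos hMpos this]
  have hK : (0:ℝ) ≤ A ^ ((3:ℝ)/2) * B * t0 ^ (3 * B / 2 - 1) * Real.exp (-t0) := by positivity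
  calc ∫ u in t0..T, F u ≤ _ := step2
    _ = (A ^ ((3:ℝ)/2) * B * t0 ^ (3 * B / 2 - 1) * Real.exp (-t0)) *
        ∫ u in t0..T, Real.exp (-(u - t0) / M) := intervalIntegral.integral_const_mul _ _
    _ ≤ (A ^ ((3:ℝ)/2) * B * t0 ^ (3 * B / 2 - 1) * Real.exp (-t0)) * M :=
        mul_le_mul_of_nonneg_left step3 hK
    _ = M * (A ^ ((3:ℝ)/2) * B * t0 ^ (3 * B / 2 - 1) * Real.exp (-t0)) := by ring

private lemma tail_bound (A B : ℝ) (hA : 1 ≤ A) (hB : 0 < B) (a : ℕ → ℝ) (hpos : ∀ n, 0 ≤ a n)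
    (hbound : ∀ n : ℕ, 1 ≤ n →
      a n ≤ 2 * Real.exp 1 * (n : ℝ) ^ ((1 : ℝ) / 2) *
        Real.exp (-((n : ℝ) / A) ^ ((1 : ℝ) / B)))
    (n : ℕ) (hn : A * (max (3 * B / 2) 1) ^ B + 1 ≤ (n : ℝ)) :
    Summable (fun k => a (k + n)) ∧
      ∑' k : ℕ, a (k + n) ≤
        6 * A ^ ((1 : ℝ) / B) * B * max (3 * B / 2) 1 *
          ((n : ℝ) - 1) ^ ((3 : ℝ) / 2 - 1 / B) *
          Real.exp (-(((n : ℝ) - 1) / A) ^ ((1 : ℝ) / B)) := by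
  set M := max (3 * B / 2) 1 with hMdef
  have hM1 : (1:ℝ) ≤ M := le_max_right _ _
  have hMB : 3 * B / 2 ≤ M := le_max_left _ _
  have hApos : (0:ℝ) < A := by linarith
  have hMB1 : (1:ℝ) ≤ M ^ B := Real.one_le_rpow hM1 hB.le
  set x0 : ℝ := (n : ℝ) - 1 with hx0def
  have hx0 : A * M ^ B ≤ x0 := by simp only [hx0def]; linarith
  have hx0pos : (0:ℝ) < x0 := by nlinarith
  have hn1 : 1 ≤ n := by
    have h1 : (1:ℝ) ≤ (n : ℝ) := by nlinarith
    exact_mod_cast h1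
  set G : ℝ → ℝ := fun x => x ^ ((1:ℝ)/2) * Real.exp (-((x / A) ^ ((1:ℝ)/B))) with hGdef
  set C : ℝ := 6 * A ^ ((1 : ℝ) / B) * B * M * x0 ^ ((3 : ℝ) / 2 - 1 / B) *
    Real.exp (-((x0 / A) ^ ((1 : ℝ) / B))) with hCdef
  have key : ∀ N : ℕ, ∑ i ∈ Finset.range N, a (i + n) ≤ C := by
    intro N
    have hterm : ∀ i : ℕ, a (i + n) ≤ 2 * Real.exp 1 * G (x0 + ((i:ℕ) + 1 : ℕ)) := by
      intro i
      have h1 := hbound (i + n) (by omega)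
      have h2 : ((i + n : ℕ) : ℝ) = x0 + ((i + 1 : ℕ) : ℝ) := by
        push_cast [hx0def]
        ring
      calc a (i + n) ≤ 2 * Real.exp 1 * ((i + n : ℕ) : ℝ) ^ ((1 : ℝ) / 2) *
            Real.exp (-(((i + n : ℕ) : ℝ) / A) ^ ((1 : ℝ) / B)) := h1
        _ = 2 * Real.exp 1 * G (x0 + ((i:ℕ) + 1 : ℕ)) := by
            rw [hGdef]
            simp only []
            rw [h2]
            push_cast
            ring
    have hanti : AntitoneOn G (Icc x0 (x0 + (N:ℝ))) := by
      apply (g_anti hA hB hM1 hMB hx0).mono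
      intro x hx
      exact hx.1
    have hsum : ∑ i ∈ Finset.range N, G (x0 + ((i:ℕ) + 1 : ℕ)) ≤
        ∫ x in x0..x0 + (N:ℝ), G x := hanti.sum_le_integral
    have hint : ∫ x in x0..x0 + (N:ℝ), G x ≤
        M * (A ^ ((3:ℝ)/2) * B * ((x0 / A) ^ ((1:ℝ)/B)) ^ (3 * B / 2 - 1) *
          Real.exp (-((x0 / A) ^ ((1:ℝ)/B)))) :=
      integral_bound hA hB hM1 hMB hx0 (le_add_of_nonneg_right (Nat.cast_nonneg N))
    have hconv : A ^ ((3:ℝ)/2) * B * ((x0 / A) ^ ((1:ℝ)/B)) ^ (3 * B / 2 - 1) *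
        Real.exp (-((x0 / A) ^ ((1:ℝ)/B))) =
        A ^ ((1:ℝ)/B) * B * x0 ^ ((3:ℝ)/2 - 1/B) * Real.exp (-((x0 / A) ^ ((1:ℝ)/B))) := by
      have c1 : ((x0 / A) ^ ((1:ℝ)/B)) ^ (3 * B / 2 - 1) =
          x0 ^ ((3:ℝ)/2 - 1/B) / A ^ ((3:ℝ)/2 - 1/B) := by
        rw [← Real.rpow_mul (by positivity)]
        rw [show (1:ℝ)/B * (3 * B / 2 - 1) = (3:ℝ)/2 - 1/B by field_simp]
        exact Real.div_rpow hx0pos.le hApos.le _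
      have c2 : A ^ ((3:ℝ)/2) = A ^ ((1:ℝ)/B) * A ^ ((3:ℝ)/2 - 1/B) := by
        rw [← Real.rpow_add hApos]
        ring_nf
      have hAne : A ^ ((3:ℝ)/2 - 1/B) ≠ 0 := (Real.rpow_pos_of_pos hApos _).ne'
      rw [c1, c2]
      field_simp
    have h6 : 2 * Real.exp 1 ≤ 6 := by nlinarith [Real.exp_one_lt_d9]
    have hPnn : (0:ℝ) ≤ A ^ ((1:ℝ)/B) * B * x0 ^ ((3:ℝ)/2 - 1/B) *
        Real.exp (-((x0 / A) ^ ((1:ℝ)/B))) * M := by positivity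
    calc ∑ i ∈ Finset.range N, a (i + n)
        ≤ ∑ i ∈ Finset.range N, 2 * Real.exp 1 * G (x0 + ((i:ℕ) + 1 : ℕ)) :=
          Finset.sum_le_sum fun i _ => hterm i
      _ = 2 * Real.exp 1 * ∑ i ∈ Finset.range N, G (x0 + ((i:ℕ) + 1 : ℕ)) := by
          rw [Finset.mul_sum]
      _ ≤ 2 * Real.exp 1 * ∫ x in x0..x0 + (N:ℝ), G x := by
          apply mul_le_mul_of_nonneg_left hsum (by positivity)
      _ ≤ 2 * Real.exp 1 * (M * (A ^ ((1:ℝ)/B) * B * x0 ^ ((3:ℝ)/2 - 1/B) *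
            Real.exp (-((x0 / A) ^ ((1:ℝ)/B))))) := by
          rw [← hconv]
          apply mul_le_mul_of_nonneg_left hint (by positivity)
      _ ≤ C := by
          rw [hCdef]
          have := mul_le_mul_of_nonneg_right h6 hPnn
          ring_nf at this ⊢
          linarith
  refine ⟨summable_of_sum_range_le (fun k => hpos _) key, ?_⟩
  exact Real.tsum_le_of_sum_range_le (fun k => hpos _) key

theorem stmt10 (A B : ℝ) (hA : 1 ≤ A) (hB : 0 < B) (a : ℕ → ℝ) (hpos : ∀ n, 0 ≤ a n)
    (hbound : ∀ n : ℕ, 1 ≤ n →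
      a n ≤ 2 * Real.exp 1 * (n : ℝ) ^ ((1 : ℝ) / 2) *
        Real.exp (-((n : ℝ) / A) ^ ((1 : ℝ) / B))) :
    Summable a ∧
      ∀ n : ℕ, A * (max (3 * B / 2) 1) ^ B + 1 ≤ (n : ℝ) →
        ∑' k : ℕ, a (k + n) ≤
          6 * A ^ ((1 : ℝ) / B) * B * max (3 * B / 2) 1 *
            ((n : ℝ) - 1) ^ ((3 : ℝ) / 2 - 1 / B) *
            Real.exp (-(((n : ℝ) - 1) / A) ^ ((1 : ℝ) / B)) := by
  constructor
  · set n₀ : ℕ := ⌈A * (max (3 * B / 2) 1) ^ B + 1⌉₊ with hn₀def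
    have hn₀ : A * (max (3 * B / 2) 1) ^ B + 1 ≤ (n₀ : ℝ) := Nat.le_ceil _
    exact (summable_nat_add_iff n₀).mp (tail_bound A B hA hB a hpos hbound n₀ hn₀).1
  · intro n hn
    exact (tail_bound A B hA hB a hpos hbound n hn).2
end
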